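/- Let $\mu$ be a measure on $[-1,1]$ with infinite support, let $q_{m}$ be a polynomial of degree $2n - m - 1$ that is strictly positive on $[-1,1]$ with $0 \le m \le 2n-1$, and let $\mu_n$ be the measure with $d\mu_n = q_m^{-1} d\mu$. If $x_1 < \cdots < x_n$ are the zeros of the $n$-th monic orthogonal polynomial $q_{\mu_n,n}$, and the weights are defined by $w_j = q_m(x_j)\int L_j(x)\,d\mu_n(x)$ where $L_j$ are the Lagrange basis polynomials for the nodes $x_1,\ldots,x_n$, then $\sum_{j=1}^n w_j\, p(x_j) = \int p(x)\,d\mu(x)$ for every polynomial $p$ of degree at most $m$. -/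

import Mathlib

open MeasureTheory Polynomial

private lemma aux_integrable (ν : Measure ℝ) [IsFiniteMeasure ν]
    (hν : ν (Set.Icc (-1:ℝ) 1)ᶜ = 0) (f : ℝ → ℝ) (hf : Continuous f) :
    Integrable f ν := by
  obtain ⟨C, hC⟩ := isCompact_Icc.exists_bound_of_continuousOn hf.continuousOn
  refine (integrable_const C).mono' hf.aestronglyMeasurable ?_
  have hmem : ∀ᵐ t ∂ν, t ∈ Set.Icc (-1:ℝ) 1 := mem_ae_iff.mpr hν
  filter_upwards [hmem] with t ht using hC t ht

/-- The interpolatory rule with nodes at the zeros of the `n`-th monic orthogonal polynomial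
for `dμₙ = qₘ⁻¹ dμ` and weights `wⱼ = qₘ(xⱼ) ∫ Lⱼ dμₙ` is exact for polynomials of degree
at most `m` with respect to `μ`. -/
theorem stmt4 (n m : ℕ) (hn : 0 < n) (hm : m ≤ 2 * n - 1)
    (μ : Measure ℝ) [IsFiniteMeasure μ]
    (hsupp : μ (Set.Icc (-1 : ℝ) 1)ᶜ = 0)
    (hinf : {t : ℝ | ∀ ε > 0, 0 < μ (Set.Ioo (t - ε) (t + ε))}.Infinite)
    (qm : Polynomial ℝ) (hdeg : qm.natDegree = 2 * n - m - 1)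
    (hqmpos : ∀ t ∈ Set.Icc (-1 : ℝ) 1, 0 < qm.eval t)
    (μn : Measure ℝ)
    (hμn : μn = μ.withDensity (fun t => ENNReal.ofReal (1 / qm.eval t)))
    (x : Fin n → ℝ) (hx : StrictMono x)
    (Q : Polynomial ℝ) (hQ : Q = ∏ j, (X - C (x j)))
    (horth : ∀ ν < n, ∫ t, t ^ ν * Q.eval t ∂μn = 0)
    (w : Fin n → ℝ)
    (hw : ∀ j, w j = qm.eval (x j) *
      ∫ t, (∏ k ∈ Finset.univ.erase j, (t - x k) / (x j - x k)) ∂μn) :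
    ∀ p : Polynomial ℝ, p.degree ≤ (m : ℕ) →
      ∑ j, w j * p.eval (x j) = ∫ t, p.eval t ∂μ := by
  intro p hp
  set I := Set.Icc (-1:ℝ) 1 with hI
  have hmemμ : ∀ᵐ t ∂μ, t ∈ I := mem_ae_iff.mpr hsupp
  obtain ⟨t₀, ht₀, hmin⟩ := (isCompact_Icc : IsCompact (Set.Icc (-1:ℝ) 1)).exists_isMinOn (f := fun t => qm.eval t)
    (Set.nonempty_Icc.mpr (by norm_num : (-1:ℝ) ≤ 1)) qm.continuous.continuousOn
  have hε0 : 0 < qm.eval t₀ := hqmpos t₀ ht₀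
  have hμnI : μn Iᶜ = 0 := by
    rw [hμn, withDensity_apply _ measurableSet_Icc.compl]
    exact setLIntegral_measure_zero _ _ hsupp
  haveI : IsFiniteMeasure μn := by
    constructor
    rw [hμn, withDensity_apply _ MeasurableSet.univ, Measure.restrict_univ]
    calc ∫⁻ t, ENNReal.ofReal (1 / qm.eval t) ∂μ
        ≤ ∫⁻ _, ENNReal.ofReal (1 / qm.eval t₀) ∂μ := by
          refine lintegral_mono_ae ?_
          filter_upwards [hmemμ] with t ht
          exact ENNReal.ofReal_le_ofReal
            (one_div_le_one_div_of_le hε0 (hmin ht))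
      _ < ⊤ := by
          rw [lintegral_const]
          exact ENNReal.mul_lt_top ENNReal.ofReal_lt_top (measure_lt_top μ _)
  have hmemμn : ∀ᵐ t ∂μn, t ∈ I := mem_ae_iff.mpr hμnI
  have hintμn : ∀ f : ℝ → ℝ, Continuous f → Integrable f μn :=
    fun f hf => aux_integrable μn hμnI f hf
  -- change of measure
  have hcom : ∀ r : Polynomial ℝ,
      ∫ t, r.eval t * qm.eval t ∂μn = ∫ t, r.eval t ∂μ := by
    intro r
    have hfmeas : Measurable fun t => (1 / qm.eval t).toNNReal :=
      measurable_real_toNNReal.comp (measurable_const.div qm.continuous.measurable)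
    have h0 : μn = μ.withDensity (fun t => ((1 / qm.eval t).toNNReal : ENNReal)) := hμn
    rw [h0, integral_withDensity_eq_integral_smul hfmeas]
    refine integral_congr_ae ?_
    filter_upwards [hmemμ] with t ht
    have hq : 0 < qm.eval t := hqmpos t ht
    simp only [NNReal.smul_def, smul_eq_mul]
    rw [Real.coe_toNNReal _ (by positivity)]
    field_simp
  -- Q is monic of degree n and vanishes at nodes
  have hQmonic : Q.Monic := by
    rw [hQ]; exact monic_prod_of_monic _ _ fun j _ => monic_X_sub_C _
  have hQdeg : Q.natDegree = n := by
    rw [hQ, natDegree_prod_of_monic _ _ fun j _ => monic_X_sub_C _]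
    simp
  have hQzero : ∀ j, Q.eval (x j) = 0 := by
    intro j
    rw [hQ, eval_prod]
    exact Finset.prod_eq_zero (Finset.mem_univ j) (by simp)
  have hinj : Set.InjOn x (Finset.univ : Finset (Fin n)) := fun a _ b _ h => hx.injective h
  have hbasis : ∀ j t, (Lagrange.basis Finset.univ x j).eval t =
      ∏ k ∈ Finset.univ.erase j, (t - x k) / (x j - x k) := by
    intro j t
    rw [Lagrange.basis, eval_prod]
    refine Finset.prod_congr rfl fun k _ => ?_
    rw [Lagrange.basisDivisor]
    simp [div_eq_inv_mul]
  -- Gauss exactness for degree ≤ 2n-1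
  have key : ∀ r : Polynomial ℝ, r.natDegree ≤ 2 * n - 1 →
      ∫ t, r.eval t ∂μn =
        ∑ j, (∫ t, (Lagrange.basis Finset.univ x j).eval t ∂μn) * r.eval (x j) := by
    intro r hr
    set s := r /ₘ Q with hs
    set ρ := r %ₘ Q with hρ
    have hdecomp : ρ + Q * s = r := modByMonic_add_div r Q
    have hsdeg : s.natDegree < n := by
      rw [hs, natDegree_divByMonic r hQmonic, hQdeg]
      omega
    have hρdeg : ρ.degree < (Finset.univ : Finset (Fin n)).card := by
      have h1 := degree_modByMonic_lt r hQmonic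
      rw [degree_eq_natDegree hQmonic.ne_zero, hQdeg] at h1
      simpa using h1
    have hρinterp : ρ = Lagrange.interpolate Finset.univ x (fun j => ρ.eval (x j)) :=
      Lagrange.eq_interpolate hinj hρdeg
    have hρeval : ∀ j, ρ.eval (x j) = r.eval (x j) := by
      intro j
      conv_rhs => rw [← hdecomp]
      simp [hQzero j]
    have hsplit : ∫ t, r.eval t ∂μn
        = ∫ t, ρ.eval t ∂μn + ∫ t, Q.eval t * s.eval t ∂μn := by
      rw [← integral_add (hintμn _ ρ.continuous)
        (hintμn (fun t => Q.eval t * s.eval t) (Q.continuous.mul s.continuous))]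
      refine integral_congr_ae (Filter.Eventually.of_forall fun t => ?_)
      conv_lhs => rw [← hdecomp]
      simp
    have hQs : ∫ t, Q.eval t * s.eval t ∂μn = 0 := by
      have hev : ∀ t : ℝ, Q.eval t * s.eval t
          = ∑ ν ∈ Finset.range n, s.coeff ν * (t ^ ν * Q.eval t) := by
        intro t
        rw [eval_eq_sum_range' hsdeg t, Finset.mul_sum]
        exact Finset.sum_congr rfl fun ν _ => by ring
      simp_rw [hev]
      rw [integral_finset_sum _ (fun ν _ =>
        ((hintμn (fun t => t ^ ν * Q.eval t) ((continuous_pow ν).mul Q.continuous)).const_mul _))]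
      refine Finset.sum_eq_zero fun ν hν => ?_
      rw [integral_const_mul, horth ν (Finset.mem_range.mp hν), mul_zero]
    have hρint : ∫ t, ρ.eval t ∂μn
        = ∑ j, (∫ t, (Lagrange.basis Finset.univ x j).eval t ∂μn) * ρ.eval (x j) := by
      conv_lhs => rw [hρinterp]
      have hev : ∀ t : ℝ, (Lagrange.interpolate Finset.univ x fun j => ρ.eval (x j)).eval t
          = ∑ j, ρ.eval (x j) * (Lagrange.basis Finset.univ x j).eval t := by
        intro t
        rw [Lagrange.interpolate_apply, eval_finset_sum]
        exact Finset.sum_congr rfl fun j _ => by simp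
      simp_rw [hev]
      rw [integral_finset_sum _ (fun j _ =>
        ((hintμn _ (Lagrange.basis Finset.univ x j).continuous).const_mul _))]
      exact Finset.sum_congr rfl fun j _ => by rw [integral_const_mul]; ring
    rw [hsplit, hQs, add_zero, hρint]
    exact Finset.sum_congr rfl fun j _ => by rw [hρeval j]
  -- assemble
  have hpdeg : p.natDegree ≤ m := natDegree_le_iff_degree_le.mpr hp
  have hrdeg : (p * qm).natDegree ≤ 2 * n - 1 :=
    le_trans natDegree_mul_le (by rw [hdeg]; omega)
  calc ∑ j, w j * p.eval (x j)
      = ∑ j, (∫ t, (Lagrange.basis Finset.univ x j).eval t ∂μn) * (p * qm).eval (x j) := by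
        refine Finset.sum_congr rfl fun j _ => ?_
        rw [hw j]
        have hLj : (∫ t, (∏ k ∈ Finset.univ.erase j, (t - x k) / (x j - x k)) ∂μn)
            = ∫ t, (Lagrange.basis Finset.univ x j).eval t ∂μn :=
          integral_congr_ae (Filter.Eventually.of_forall fun t => (hbasis j t).symm)
        rw [hLj, eval_mul]
        ring
    _ = ∫ t, (p * qm).eval t ∂μn := (key _ hrdeg).symm
    _ = ∫ t, p.eval t ∂μ := by simpa [eval_mul] using hcom p
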